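/- Let ε > 0 and let f : ℝ → ℝ be a function satisfying |f(x + y) − f(x) − f(y)| ≤ ε for all x, y ∈ ℝ, and such that the mapping x ↦ f(cosh(x)) − sinh(x)·f(x) is locally bounded on ℝ. Then there exist a real number λ and a real derivation χ : ℝ → ℝ such that |f(x) − (χ(x) + λ·x)| ≤ ε for all x ∈ ℝ. -/

import Mathlib

open Real Set

/-- A function `φ` is locally bounded on a set `s` if every point of `s` has a
neighborhood (within `s`) on which `φ` is bounded. -/
def LocallyBoundedOn (φ : ℝ → ℝ) (s : Set ℝ) : Prop :=
  ∀ x ∈ s, ∃ C : ℝ, ∀ᶠ y in nhdsWithin x s, |φ y| ≤ C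

/-- A real-valued function is *regular* on its domain `s` if it is locally bounded,
or continuous, or Lebesgue measurable on `s`. -/
def RegularOn (φ : ℝ → ℝ) (s : Set ℝ) : Prop :=
  LocallyBoundedOn φ s ∨ ContinuousOn φ s ∨ Measurable (s.restrict φ)

/-- A real derivation: an additive function satisfying the Leibniz rule. -/
def IsRealDerivation (χ : ℝ → ℝ) : Prop :=
  (∀ x y : ℝ, χ (x + y) = χ x + χ y) ∧ (∀ x y : ℝ, χ (x * y) = x * χ y + y * χ x)

open Filter Topology

lemma hyers (ε : ℝ) (hε : 0 ≤ ε) (f : ℝ → ℝ)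
    (hf : ∀ x y : ℝ, |f (x + y) - f x - f y| ≤ ε) :
    ∃ a : ℝ → ℝ, (∀ x y : ℝ, a (x + y) = a x + a y) ∧ ∀ x : ℝ, |f x - a x| ≤ ε := by
  set u : ℝ → ℕ → ℝ := fun x n => f (2 ^ n * x) / 2 ^ n with hu
  have hstep : ∀ (x : ℝ) (n : ℕ), |u x (n + 1) - u x n| ≤ (ε / 2) * (1 / 2) ^ n := by
    intro x n
    have h2 : |f (2 ^ n * x + 2 ^ n * x) - f (2 ^ n * x) - f (2 ^ n * x)| ≤ ε := hf _ _
    have hpow : (0:ℝ) < 2 ^ (n+1) := by positivity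
    have heq : u x (n + 1) - u x n
        = (f (2 ^ n * x + 2 ^ n * x) - f (2 ^ n * x) - f (2 ^ n * x)) / 2 ^ (n+1) := by
      have hx : (2:ℝ) ^ (n+1) * x = 2 ^ n * x + 2 ^ n * x := by ring
      simp only [hu]
      rw [hx, pow_succ, div_sub_div _ _ (by positivity : ((2:ℝ)^n*2) ≠ 0) (by positivity : ((2:ℝ)^n) ≠ 0)]
      rw [div_eq_div_iff (by positivity) (by positivity)]
      ring
    rw [heq, abs_div, abs_of_pos hpow, div_le_iff₀ hpow]
    calc |f (2 ^ n * x + 2 ^ n * x) - f (2 ^ n * x) - f (2 ^ n * x)| ≤ ε := h2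
      _ = ε / 2 * (1 / 2) ^ n * 2 ^ (n+1) := by
        have h2 : ((2:ℝ)^n)⁻¹ * 2^(n+1) = 2 := by
          rw [pow_succ, ← mul_assoc, inv_mul_cancel₀ (by positivity)]; ring
        rw [one_div, inv_pow, mul_assoc, h2]; ring
  have hcauchy : ∀ x : ℝ, ∃ L : ℝ, Tendsto (u x) atTop (𝓝 L) := by
    intro x
    have : CauchySeq (u x) := by
      apply cauchySeq_of_le_geometric (1/2 : ℝ) (ε/2) (by norm_num)
      intro n
      rw [dist_comm, dist_eq_norm, Real.norm_eq_abs]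
      exact hstep x n
    exact cauchySeq_tendsto_of_complete this
  choose a ha using hcauchy
  refine ⟨a, ?_, ?_⟩
  · intro x y
    have hdiff : Tendsto (fun n => u (x+y) n - u x n - u y n) atTop
        (𝓝 (a (x+y) - a x - a y)) := ((ha (x+y)).sub (ha x)).sub (ha y)
    have hzero : Tendsto (fun n => u (x+y) n - u x n - u y n) atTop (𝓝 0) := by
      apply squeeze_zero_norm (a := fun n => ε * (1/2) ^ n)
      · intro n
        have hpow : (0:ℝ) < 2 ^ n := by positivity
        have heq : u (x+y) n - u x n - u y n
            = (f (2 ^ n * x + 2 ^ n * y) - f (2 ^ n * x) - f (2 ^ n * y)) / 2 ^ n := by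
          simp only [hu, mul_add]
          field_simp
        rw [Real.norm_eq_abs, heq, abs_div, abs_of_pos hpow, div_le_iff₀ hpow]
        calc |f (2 ^ n * x + 2 ^ n * y) - f (2 ^ n * x) - f (2 ^ n * y)| ≤ ε := hf _ _
          _ = ε * (1/2) ^ n * 2 ^ n := by
            rw [div_pow, one_pow, mul_assoc, div_mul_cancel₀]
            · ring
            · positivity
      · simpa using tendsto_const_nhds.mul
          (tendsto_pow_atTop_nhds_zero_of_lt_one (by norm_num) (by norm_num : (1/2:ℝ) < 1))
    have := tendsto_nhds_unique hdiff hzero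
    linarith
  · intro x
    have hbound : ∀ n, |u x n - f x| ≤ ε * (1 - (1/2) ^ n) := by
      intro n
      induction n with
      | zero => simp [hu]
      | succ n ih =>
        have h1 := hstep x n
        calc |u x (n+1) - f x| ≤ |u x (n+1) - u x n| + |u x n - f x| :=
              abs_sub_le _ _ _
          _ ≤ ε / 2 * (1/2) ^ n + ε * (1 - (1/2) ^ n) := add_le_add h1 ih
          _ = ε * (1 - (1/2) ^ (n+1)) := by ring
    have hlim : Tendsto (fun n => |u x n - f x|) atTop (𝓝 |a x - f x|) :=
      ((ha x).sub tendsto_const_nhds).abs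
    have : |a x - f x| ≤ ε := by
      apply le_of_tendsto hlim
      filter_upwards with n
      calc |u x n - f x| ≤ ε * (1 - (1/2)^n) := hbound n
        _ ≤ ε * 1 := by
            apply mul_le_mul_of_nonneg_left _ hε
            have : (0:ℝ) ≤ (1/2)^n := by positivity
            linarith
        _ = ε := mul_one ε
    rw [abs_sub_comm]; exact this

lemma additive_rat (a : ℝ → ℝ) (hadd : ∀ x y : ℝ, a (x + y) = a x + a y) (q : ℚ) :
    a (q : ℝ) = q * a 1 := by
  let A : ℝ →+ ℝ := AddMonoidHom.mk' a hadd
  have : A ((q : ℝ)) = A (q • (1:ℝ)) := by norm_num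
  have h2 : A (q • (1:ℝ)) = q • A 1 := map_rat_smul A q 1
  show A ((q:ℝ)) = q * A 1
  rw [this, h2, Rat.smul_def]

lemma additive_nat_mul (a : ℝ → ℝ) (hadd : ∀ x y : ℝ, a (x + y) = a x + a y) (n : ℕ) (x : ℝ) :
    a ((n : ℝ) * x) = n * a x := by
  induction n with
  | zero =>
    have h0 : a 0 = 0 := by have := hadd 0 0; simp at this; linarith
    simp [h0]
  | succ n ih =>
    have : ((n:ℝ)+1) * x = (n:ℝ) * x + x := by ring
    push_cast
    rw [this, hadd, ih]; ring

lemma additive_bounded_linear (a : ℝ → ℝ) (hadd : ∀ x y : ℝ, a (x + y) = a x + a y)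
    (p r M : ℝ) (hpr : p < r) (hM : ∀ x : ℝ, p ≤ x → x ≤ r → |a x| ≤ M) :
    ∀ x : ℝ, a x = a 1 * x := by
  have h0 : a 0 = 0 := by have := hadd 0 0; simpa using this
  set h : ℝ → ℝ := fun x => a x - a 1 * x with hh
  have hhadd : ∀ x y : ℝ, h (x + y) = h x + h y := by
    intro x y; simp only [hh, hadd]; ring
  have hq0 : ∀ q : ℚ, h (q : ℝ) = 0 := by
    intro q; simp only [hh, additive_rat a hadd q]; ring
  set M' : ℝ := M + |a 1| * (|p| + |r|) with hM'
  have hbd : ∀ x : ℝ, p ≤ x → x ≤ r → |h x| ≤ M' := by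
    intro x h1 h2
    have hx : |x| ≤ |p| + |r| := by
      have h3 := neg_abs_le p
      have h4 := le_abs_self r
      have h5 := abs_nonneg p
      have h6 := abs_nonneg r
      rw [abs_le]
      constructor <;> linarith
    calc |h x| ≤ |a x| + |a 1 * x| := by simp only [hh]; exact abs_sub _ _
      _ ≤ M + |a 1| * (|p| + |r|) := by
          rw [abs_mul]
          exact add_le_add (hM x h1 h2) (mul_le_mul_of_nonneg_left hx (abs_nonneg _))
  have hglob : ∀ x : ℝ, |h x| ≤ M' := by
    intro x
    obtain ⟨q, hq1, hq2⟩ := exists_rat_btwn (show x - r < x - p by linarith)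
    have heq : h x = h (x - q) := by
      have := hhadd (x - q) (q : ℝ)
      rw [hq0 q] at this
      simp at this
      linarith
    rw [heq]
    exact hbd _ (by linarith) (by linarith)
  have hzero : ∀ x : ℝ, h x = 0 := by
    intro x
    by_contra hne
    have hpos : 0 < |h x| := abs_pos.2 hne
    obtain ⟨n, hn⟩ := exists_nat_gt (M' / |h x|)
    have hn' : M' < n * |h x| := by
      rw [div_lt_iff₀ hpos] at hn; linarith
    have hmul : h ((n:ℝ) * x) = n * h x := additive_nat_mul h hhadd n x
    have hg := hglob ((n:ℝ) * x)
    rw [hmul, abs_mul, Nat.abs_cast] at hg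
    linarith
  intro x
  have := hzero x
  simp only [hh] at this
  linarith

lemma derivation_of_sq_bounded (a : ℝ → ℝ) (hadd : ∀ x y : ℝ, a (x + y) = a x + a y)
    (p r M : ℝ) (hp1 : 1 < p) (hpr : p < r)
    (hM : ∀ t : ℝ, p ≤ t → t ≤ r → |a (t ^ 2) - 2 * t * a t| ≤ M) :
    IsRealDerivation (fun x => a x - a 1 * x) := by
  have h0 : a 0 = 0 := by have := hadd 0 0; simp at this; linarith
  set B : ℝ → ℝ → ℝ := fun x y => a (x * y) - x * a y - y * a x with hB
  -- B is additive in each variable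
  have hBadd1 : ∀ x x' y : ℝ, B (x + x') y = B x y + B x' y := by
    intro x x' y
    simp only [hB]
    rw [add_mul, hadd, hadd]
    ring
  have hBsymm : ∀ x y : ℝ, B x y = B y x := by
    intro x y; simp only [hB]; rw [mul_comm]; ring
  have hBadd2 : ∀ x y y' : ℝ, B x (y + y') = B x y + B x y' := by
    intro x y y'
    rw [hBsymm, hBadd1, hBsymm y x, hBsymm y' x]
  -- ψ(t) = B t t = a(t^2) - 2 t a t
  have hpsi : ∀ t : ℝ, B t t = a (t ^ 2) - 2 * t * a t := by
    intro t; simp only [hB]; rw [← sq]; ring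
  -- ψ(2w) = 4 ψ(w)
  have hdouble : ∀ w : ℝ, B (2 * w) (2 * w) = 4 * B w w := by
    intro w
    have h1 : (2:ℝ) * w = w + w := by ring
    rw [h1, hBadd1, hBadd2]
    ring
  set r' : ℝ := p + (r - p) / 2 with hr'
  have hpr' : p < r' := by simp only [hr']; linarith
  have hr'r : r' ≤ r := by simp only [hr']; linarith
  -- |B u v| ≤ 3M for u, v ∈ [p, r']
  have hBbd : ∀ u v : ℝ, p ≤ u → u ≤ r' → p ≤ v → v ≤ r' → |B u v| ≤ 3 * M := by
    intro u v hu1 hu2 hv1 hv2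
    have hsum : B (u + v) (u + v) = B u u + 2 * B u v + B v v := by
      rw [hBadd1, hBadd2, hBadd2, hBsymm v u]; ring
    have h4 : B (u + v) (u + v) = 4 * B ((u+v)/2) ((u+v)/2) := by
      have := hdouble ((u+v)/2)
      rw [show 2 * ((u+v)/2) = u + v by ring] at this
      exact this
    have hw1 : p ≤ (u + v) / 2 := by linarith
    have hw2 : (u + v) / 2 ≤ r := by simp only [hr'] at hu2 hv2; linarith
    have b1 : |B ((u+v)/2) ((u+v)/2)| ≤ M := by rw [hpsi]; exact hM _ hw1 hw2
    have b2 : |B u u| ≤ M := by rw [hpsi]; exact hM _ hu1 (by linarith)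
    have b3 : |B v v| ≤ M := by rw [hpsi]; exact hM _ hv1 (by linarith)
    have key : 2 * B u v = 4 * B ((u+v)/2) ((u+v)/2) - B u u - B v v := by
      rw [← h4, hsum]; ring
    have : |2 * B u v| ≤ 6 * M := by
      rw [key]
      calc |4 * B ((u+v)/2) ((u+v)/2) - B u u - B v v|
          ≤ |4 * B ((u+v)/2) ((u+v)/2)| + |B u u| + |B v v| := by
            exact (abs_sub _ _).trans (by gcongr; exact abs_sub _ _)
        _ ≤ 4 * M + M + M := by
            rw [abs_mul]
            have : |(4:ℝ)| = 4 := by norm_num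
            rw [this]
            gcongr
        _ = 6 * M := by ring
    rw [abs_mul] at this
    have : 2 * |B u v| ≤ 6 * M := by norm_num at this; linarith
    linarith
  -- for v ∈ [p, r'], x ↦ B x v is additive and bounded ⇒ linear: B x v = B 1 v * x
  have hlin1 : ∀ v : ℝ, p ≤ v → v ≤ r' → ∀ x : ℝ, B x v = B 1 v * x := by
    intro v hv1 hv2
    exact additive_bounded_linear (fun x => B x v) (fun x y => hBadd1 x y v) p r' (3*M) hpr'
      (fun x h1 h2 => hBbd x v h1 h2 hv1 hv2)
  have hB1 : ∀ v : ℝ, B 1 v = -(a 1) * v := by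
    intro v; simp only [hB]; rw [one_mul]; ring
  -- for each x, v ↦ B x v + a 1 * x * v is additive, zero on [p, r'] ⇒ zero everywhere
  have hfinal : ∀ x v : ℝ, B x v = -(a 1) * x * v := by
    intro x v
    set g : ℝ → ℝ := fun v => B x v + a 1 * x * v with hg
    have hgadd : ∀ u w : ℝ, g (u + w) = g u + g w := by
      intro u w; simp only [hg]; rw [hBadd2]; ring
    have hgzero : ∀ u : ℝ, p ≤ u → u ≤ r' → g u = 0 := by
      intro u h1 h2
      simp only [hg]
      rw [hlin1 u h1 h2 x, hB1]
      ring
    have hglin : ∀ v : ℝ, g v = g 1 * v :=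
      additive_bounded_linear g hgadd p r' 0 hpr'
        (fun u h1 h2 => by rw [hgzero u h1 h2]; simp)
    have hgp : g p = 0 := hgzero p le_rfl (le_of_lt hpr')
    have hg1 : g 1 = 0 := by
      have := hglin p
      rw [hgp] at this
      have hpne : p ≠ 0 := by linarith
      field_simp at this
      rcases mul_eq_zero.1 (by linarith : g 1 * p = 0) with h | h
      · exact h
      · exact absurd h hpne
    have := hglin v
    rw [hg1] at this
    simp only [hg] at this
    linarith
  constructor
  · intro x y
    show a (x + y) - a 1 * (x + y) = (a x - a 1 * x) + (a y - a 1 * y)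
    rw [hadd]; ring
  · intro x y
    have := hfinal x y
    simp only [hB] at this
    have hax : a (x * y) = x * a y + y * a x - a 1 * x * y := by linarith
    show a (x * y) - a 1 * (x * y) = x * (a y - a 1 * y) + y * (a x - a 1 * x)
    rw [hax]
    ring

theorem stmt_15 (ε : ℝ) (hε : 0 < ε) (f : ℝ → ℝ)
    (hf : ∀ x y : ℝ, |f (x + y) - f x - f y| ≤ ε)
    (hlb : LocallyBoundedOn (fun x : ℝ => f (Real.cosh x) - Real.sinh x * f x) Set.univ) :
    ∃ (l : ℝ) (χ : ℝ → ℝ), IsRealDerivation χ ∧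
      ∀ x : ℝ, |f x - (χ x + l * x)| ≤ ε := by
  obtain ⟨a, hadd, hfa⟩ := hyers ε hε.le f hf
  -- local bounds on the f-version near 1 and near 2
  obtain ⟨C₁, hC₁⟩ := hlb 1 (mem_univ 1)
  obtain ⟨C₂, hC₂⟩ := hlb 2 (mem_univ 2)
  rw [nhdsWithin_univ, Metric.eventually_nhds_iff] at hC₁ hC₂
  obtain ⟨δ₁, hδ₁pos, hD1⟩ := hC₁
  obtain ⟨δ₂, hδ₂pos, hD2⟩ := hC₂
  set η : ℝ := min 1 (min (δ₁ / 2) (δ₂ / 4)) with hη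
  have hηpos : 0 < η := by
    exact lt_min one_pos (lt_min (by positivity) (by positivity))
  have hη1 : η ≤ 1 := min_le_left _ _
  have hηδ₁ : η < δ₁ := by
    calc η ≤ δ₁ / 2 := (min_le_right _ _).trans (min_le_left _ _)
      _ < δ₁ := by linarith
  have hηδ₂ : 2 * η < δ₂ := by
    have : η ≤ δ₂ / 4 := (min_le_right _ _).trans (min_le_right _ _)
    linarith
  -- the additive version
  set ga : ℝ → ℝ := fun y => a (Real.cosh y) - Real.sinh y * a y with hga
  have haf : ∀ t : ℝ, |a t - f t| ≤ ε := fun t => by rw [abs_sub_comm]; exact hfa t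
  -- bound on ga near a point given bound on gf there
  have hga_bd : ∀ y C : ℝ, |f (Real.cosh y) - Real.sinh y * f y| ≤ C → |y| ≤ 4 →
      |ga y| ≤ C + ε * (1 + Real.sinh 4) := by
    intro y C hC hy4
    have hsinh : |Real.sinh y| ≤ Real.sinh 4 := by
      rw [Real.abs_sinh]
      have : Real.sinh |y| ≤ Real.sinh 4 := by
        apply Real.sinh_le_sinh.2
        exact hy4
      exact this
    have key : ga y = (f (Real.cosh y) - Real.sinh y * f y)
        + (a (Real.cosh y) - f (Real.cosh y)) - Real.sinh y * (a y - f y) := by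
      simp only [hga]; ring
    rw [key]
    have t1 : |f (Real.cosh y) - Real.sinh y * f y + (a (Real.cosh y) - f (Real.cosh y))
          - Real.sinh y * (a y - f y)|
        ≤ |f (Real.cosh y) - Real.sinh y * f y + (a (Real.cosh y) - f (Real.cosh y))|
          + |Real.sinh y * (a y - f y)| := abs_sub _ _
    have t2 : |f (Real.cosh y) - Real.sinh y * f y + (a (Real.cosh y) - f (Real.cosh y))|
        ≤ |f (Real.cosh y) - Real.sinh y * f y| + |a (Real.cosh y) - f (Real.cosh y)| := abs_add_le _ _
    have t3 : |Real.sinh y * (a y - f y)| ≤ Real.sinh 4 * ε := by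
      rw [abs_mul]
      exact mul_le_mul hsinh (haf y) (abs_nonneg _) (Real.sinh_nonneg_iff.2 (by norm_num))
    have t4 : |a (Real.cosh y) - f (Real.cosh y)| ≤ ε := haf _
    have := t1.trans (add_le_add t2 t3)
    calc |f (Real.cosh y) - Real.sinh y * f y + (a (Real.cosh y) - f (Real.cosh y))
          - Real.sinh y * (a y - f y)| ≤ C + ε + Real.sinh 4 * ε := by linarith
      _ = C + ε * (1 + Real.sinh 4) := by ring
  set K₁ : ℝ := C₁ + ε * (1 + Real.sinh 4) with hK₁
  set K₂ : ℝ := C₂ + ε * (1 + Real.sinh 4) with hK₂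
  have hb1 : ∀ y : ℝ, |y - 1| ≤ η → |ga y| ≤ K₁ := by
    intro y hy
    have h1 : dist y 1 < δ₁ := by
      rw [Real.dist_eq]; exact lt_of_le_of_lt hy hηδ₁
    have h2 : |y| ≤ 4 := by
      have := abs_le.1 hy
      rw [abs_le]; constructor <;> linarith [hη1]
    exact hga_bd y C₁ (hD1 h1) h2
  have hb2 : ∀ x : ℝ, |x - 1| ≤ η → |ga (2 * x)| ≤ K₂ := by
    intro x hx
    have h1 : dist (2 * x) 2 < δ₂ := by
      rw [Real.dist_eq]
      calc |2 * x - 2| = 2 * |x - 1| := by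
            rw [show (2:ℝ) * x - 2 = 2 * (x - 1) by ring, abs_mul]
            norm_num
        _ ≤ 2 * η := by linarith [hx]
        _ < δ₂ := hηδ₂
    have h2 : |2 * x| ≤ 4 := by
      have := abs_le.1 hx
      rw [abs_le]; constructor <;> linarith [hη1]
    exact hga_bd (2 * x) C₂ (hD2 h1) h2
  -- key identity : ψ (cosh x) in terms of ga
  have hiden : ∀ x : ℝ,
      a (Real.cosh x ^ 2) - 2 * Real.cosh x * a (Real.cosh x)
        = (ga (2 * x) - 4 * Real.cosh x * ga x + a 1) / 2 := by
    intro x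
    have hc2 : Real.cosh (2 * x) = 2 * Real.cosh x ^ 2 - 1 := by
      rw [Real.cosh_two_mul]
      have := Real.cosh_sq_sub_sinh_sq x
      linarith
    have hs2 : Real.sinh (2 * x) = 2 * Real.sinh x * Real.cosh x := Real.sinh_two_mul x
    have ha2 : ∀ u : ℝ, a (2 * u) = 2 * a u := by
      intro u; rw [two_mul, hadd, two_mul]
    have hsub : ∀ u v : ℝ, a (u - v) = a u - a v := by
      intro u v
      have h0 : a 0 = 0 := by have := hadd 0 0; simp at this; linarith
      have := hadd (u - v) v
      rw [sub_add_cancel] at this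
      linarith
    have e1 : a (Real.cosh (2 * x)) = 2 * a (Real.cosh x ^ 2) - a 1 := by
      rw [hc2, hsub, ha2]
    have e2 : ga (2 * x) = 2 * a (Real.cosh x ^ 2) - a 1
        - 4 * Real.sinh x * Real.cosh x * a x := by
      simp only [hga]
      rw [e1, hs2, ha2]
      ring
    have e3 : ga x = a (Real.cosh x) - Real.sinh x * a x := rfl
    rw [e2, e3]
    ring
  -- bound on ψ on [cosh 1, cosh (1 + η)]
  set M : ℝ := (K₂ + 4 * Real.cosh 2 * K₁ + |a 1|) / 2 with hM
  have hK₁0 : 0 ≤ K₁ := le_trans (abs_nonneg _) (hb1 1 (by simpa using hηpos.le))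
  have hpsiM : ∀ t : ℝ, Real.cosh 1 ≤ t → t ≤ Real.cosh (1 + η) →
      |a (t ^ 2) - 2 * t * a t| ≤ M := by
    intro t ht1 ht2
    obtain ⟨x, hx, hcx⟩ := intermediate_value_Icc (by linarith : (1:ℝ) ≤ 1 + η)
      Real.continuous_cosh.continuousOn ⟨ht1, ht2⟩
    obtain ⟨hx1, hx2⟩ := hx
    have hxη : |x - 1| ≤ η := by rw [abs_le]; constructor <;> linarith
    have hcosh2 : Real.cosh x ≤ Real.cosh 2 := by
      rw [Real.cosh_le_cosh]
      rw [show |(2:ℝ)| = 2 by norm_num, abs_le]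
      constructor <;> linarith [hη1]
    have hcoshpos : (0:ℝ) < Real.cosh x := Real.cosh_pos x
    rw [← hcx, hiden x, abs_div, show |(2:ℝ)| = 2 by norm_num, div_le_iff₀ (by norm_num : (0:ℝ) < 2)]
    have t1 : |ga (2 * x) - 4 * Real.cosh x * ga x + a 1|
        ≤ |ga (2 * x) - 4 * Real.cosh x * ga x| + |a 1| := abs_add_le _ _
    have t2 : |ga (2 * x) - 4 * Real.cosh x * ga x|
        ≤ |ga (2 * x)| + |4 * Real.cosh x * ga x| := abs_sub _ _
    have t3 : |ga (2 * x)| ≤ K₂ := hb2 x hxη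
    have t4 : |4 * Real.cosh x * ga x| ≤ 4 * Real.cosh 2 * K₁ := by
      rw [abs_mul, abs_mul, show |(4:ℝ)| = 4 by norm_num, abs_of_pos hcoshpos]
      rw [mul_assoc, mul_assoc]
      apply mul_le_mul_of_nonneg_left _ (by norm_num : (0:ℝ) ≤ 4)
      exact mul_le_mul hcosh2 (hb1 x hxη) (abs_nonneg _) (Real.cosh_pos 2).le
    have hM2 : M * 2 = K₂ + 4 * Real.cosh 2 * K₁ + |a 1| := by rw [hM]; ring
    linarith
  -- apply the derivation lemma
  have hp1 : (1:ℝ) < Real.cosh 1 := Real.one_lt_cosh.2 one_ne_zero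
  have hpr : Real.cosh 1 < Real.cosh (1 + η) := by
    rw [Real.cosh_lt_cosh]
    rw [show |(1:ℝ)| = 1 by norm_num, abs_of_pos (by linarith : (0:ℝ) < 1 + η)]
    linarith
  have hder := derivation_of_sq_bounded a hadd (Real.cosh 1) (Real.cosh (1 + η)) M hp1 hpr hpsiM
  refine ⟨a 1, fun x => a x - a 1 * x, hder, fun x => ?_⟩
  have : f x - (a x - a 1 * x + a 1 * x) = f x - a x := by ring
  rw [this]
  exact hfa x
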